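/- Let w be the fixed point of the morphism φ from the construction and A_w its monomial algebra over a field k. Then the Lie subalgebra of A_w generated by {1, x₁,…,x₆, y₁,…,y₆} (under the commutator bracket [a,b] = ab − ba) equals all of A_w; i.e., A_w is finitely generated as a Lie algebra. -/

import Mathlib

/-- The 12-letter alphabet `{x₁,…,x₆,y₁,…,y₆}`: `(false, i)` is `x_{i+1}`
and `(true, j)` is `y_{j+1}`. -/
abbrev Letter : Type := Bool × Fin 6

/-- The letter `x_{i+1}`. -/
def X (i : Fin 6) : Letter := (false, i)

/-- The letter `y_{j+1}`. -/
def Y (j : Fin 6) : Letter := (true, j)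

/-- The morphism of the construction: `x₁↦x₁x₂y₁y₂, x₂↦x₁x₃y₁y₃, x₃↦x₁x₄y₁y₄,
x₄↦x₁x₅y₁y₅, x₅↦x₁x₆y₁y₆, x₆↦x₂x₃y₂y₃, y₁↦x₂x₄y₂y₅, y₂↦x₂x₅y₃y₄, y₃↦x₂x₆y₂y₆,
y₄↦x₃x₄y₃y₅, y₅↦x₃x₅y₃y₆, y₆↦x₃x₆y₄y₅`. -/
def phi : Letter → List Letter := fun a =>
  [[X 0, X 1, Y 0, Y 1], [X 0, X 2, Y 0, Y 2], [X 0, X 3, Y 0, Y 3],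
   [X 0, X 4, Y 0, Y 4], [X 0, X 5, Y 0, Y 5], [X 1, X 2, Y 1, Y 2],
   [X 1, X 3, Y 1, Y 4], [X 1, X 4, Y 2, Y 3], [X 1, X 5, Y 1, Y 5],
   [X 2, X 3, Y 2, Y 4], [X 2, X 4, Y 2, Y 5], [X 2, X 5, Y 3, Y 4]].getD
    ((if a.1 then 6 else 0) + a.2.val) []

/-- A monoid morphism applied to a word. -/
def applyM {α : Type*} (φ : α → List α) (u : List α) : List α := u.flatMap φ

/-- The block of `len` consecutive letters of `w` starting at position `i`. -/
def toListW {α : Type*} (w : ℕ → α) (i len : ℕ) : List α :=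
  (List.range len).map fun k => w (i + k)

/-- `v` is a factor (subword) of the right-infinite word `w`. -/
def IsFactor {α : Type*} (v : List α) (w : ℕ → α) : Prop :=
  ∃ i, toListW w i v.length = v

/-- `v` is a prefix of the right-infinite word `w`. -/
def IsPrefixW {α : Type*} (v : List α) (w : ℕ → α) : Prop :=
  toListW w 0 v.length = v

/-- `w` is the fixed point `φ^ω(x₁)` of the (4-uniform) morphism `phi`:
for every `n`, `phi^n(x₁)` (a word of length `4^n`) is a prefix of `w`. -/
def IsFixedPointWord (w : ℕ → Letter) : Prop :=
  ∀ n : ℕ, toListW w 0 (4 ^ n) = (applyM phi)^[n] [X 0]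

namespace Stmt19

/-! ### Generic list lemmas -/

section Lists
variable {α : Type*}

lemma toListW_length (w : ℕ → α) (i len : ℕ) : (toListW w i len).length = len := by
  simp [toListW]

lemma toListW_getD (w : ℕ → α) (d : α) {i len k : ℕ} (h : k < len) :
    (toListW w i len).getD k d = w (i + k) := by
  rw [List.getD_eq_getElem _ d (by simpa [toListW] using h)]
  simp [toListW]

lemma toListW_eq_of_getD (w : ℕ → α) (d : α) {v : List α} {i n : ℕ} (hlen : v.length = n)
    (h : ∀ k, k < n → w (i + k) = v.getD k d) : toListW w i n = v := by
  apply List.ext_getElem (by simp [toListW_length, hlen])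
  intro k h1 h2
  rw [← List.getD_eq_getElem _ d h1, ← List.getD_eq_getElem _ d h2,
    toListW_getD w d (by simpa [toListW_length] using h1), h k (by omega)]

lemma toListW_add (w : ℕ → α) (i a b : ℕ) :
    toListW w i (a + b) = toListW w i a ++ toListW w (i + a) b := by
  simp only [toListW, List.range_add, List.map_append, List.map_map]
  congr 1
  apply List.map_congr_left
  intro x _
  simp only [Function.comp_apply]
  congr 1
  omega

lemma toListW_one (w : ℕ → α) (i : ℕ) : toListW w i 1 = [w i] := by
  simp [toListW, List.range_succ]

lemma rot_length {v : List α} {k : ℕ} (hk : k ≤ v.length) :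
    (v.drop k ++ v.take k).length = v.length := by
  simp; omega

lemma rot_getD_lo {v : List α} {k j : ℕ} (d : α) (hj : j < v.length - k) :
    (v.drop k ++ v.take k).getD j d = v.getD (k + j) d := by
  rw [List.getD_append _ _ _ _ (by rw [List.length_drop]; omega),
    List.getD_eq_getElem _ d (by rw [List.length_drop]; omega),
    List.getD_eq_getElem _ d (by omega), List.getElem_drop]

lemma rot_getD_hi {v : List α} {k j : ℕ} (d : α) (hk : k ≤ v.length)
    (h1 : v.length - k ≤ j) (h2 : j < v.length) :
    (v.drop k ++ v.take k).getD j d = v.getD (j - (v.length - k)) d := by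
  rw [List.getD_append_right _ _ _ _ (by rw [List.length_drop]; omega), List.length_drop]
  rw [List.getD_eq_getElem _ d (by rw [List.length_take]; omega)]
  rw [List.getD_eq_getElem _ d (by omega)]
  exact List.getElem_take

lemma rot_rot (l : List α) {a b : ℕ} (ha : a ≤ l.length) (hb : b ≤ l.length - a) :
    ((l.drop a ++ l.take a).drop b ++ (l.drop a ++ l.take a).take b)
      = l.drop (a + b) ++ l.take (a + b) := by
  have h1 : b ≤ (l.drop a).length := by simp; omega
  rw [List.drop_append, List.take_append,
    Nat.sub_eq_zero_of_le h1, List.drop_zero, List.take_zero, List.append_nil,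
    List.drop_drop, List.take_add, List.append_assoc]

end Lists

/-! ### Finite checks about `phi` -/

lemma phi_length : ∀ a : Letter, (phi a).length = 4 := by decide

lemma phi_fst (a : Letter) : ∀ r : ℕ, r < 4 →
    (((phi a).getD r (X 0)).1 = true ↔ 2 ≤ r % 4) := by
  intro r hr
  interval_cases r <;> revert a <;> decide

lemma phi_inj01 : ∀ a b : Letter, (phi a).getD 0 (X 0) = (phi b).getD 0 (X 0) →
    (phi a).getD 1 (X 0) = (phi b).getD 1 (X 0) → a = b := by decide

lemma phi_inj23 : ∀ a b : Letter, (phi a).getD 2 (X 0) = (phi b).getD 2 (X 0) →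
    (phi a).getD 3 (X 0) = (phi b).getD 3 (X 0) → a = b := by decide

/-- The table of all (potential) length-2 factors of `w`. -/
def Spairs : List (Letter × Letter) :=
 [((false, 0), (false, 1)), ((false, 0), (false, 2)), ((false, 0), (false, 3)),
  ((false, 0), (false, 4)), ((false, 0), (false, 5)), ((false, 1), (false, 2)),
  ((false, 1), (false, 3)), ((false, 1), (false, 4)), ((false, 1), (false, 5)),
  ((false, 1), (true, 0)), ((false, 2), (false, 3)), ((false, 2), (false, 4)),
  ((false, 2), (false, 5)), ((false, 2), (true, 0)), ((false, 2), (true, 1)),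
  ((false, 3), (true, 0)), ((false, 3), (true, 1)), ((false, 3), (true, 2)),
  ((false, 4), (true, 0)), ((false, 4), (true, 2)), ((false, 5), (true, 0)),
  ((false, 5), (true, 1)), ((false, 5), (true, 3)), ((true, 0), (true, 1)),
  ((true, 0), (true, 2)), ((true, 0), (true, 3)), ((true, 0), (true, 4)),
  ((true, 0), (true, 5)), ((true, 1), (false, 0)), ((true, 1), (false, 1)),
  ((true, 1), (true, 2)), ((true, 1), (true, 4)), ((true, 1), (true, 5)),
  ((true, 2), (false, 0)), ((true, 2), (false, 1)), ((true, 2), (false, 2)),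
  ((true, 2), (true, 3)), ((true, 2), (true, 4)), ((true, 2), (true, 5)),
  ((true, 3), (false, 0)), ((true, 3), (false, 1)), ((true, 3), (false, 2)),
  ((true, 3), (true, 4)), ((true, 4), (false, 0)), ((true, 4), (false, 1)),
  ((true, 4), (false, 2)), ((true, 5), (false, 0)), ((true, 5), (false, 1)),
  ((true, 5), (false, 2))]

def SB (a b : Letter) : Prop := (a, b) ∈ Spairs

instance (a b : Letter) : Decidable (SB a b) := by unfold SB; infer_instance

lemma SB_inner : ∀ a : Letter, ∀ r : ℕ, r < 3 →
    SB ((phi a).getD r (X 0)) ((phi a).getD (r + 1) (X 0)) := by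
  intro a r hr
  interval_cases r <;> revert a <;> decide

lemma SB_closure : ∀ a b : Letter, SB a b →
    SB ((phi a).getD 3 (X 0)) ((phi b).getD 0 (X 0)) := by decide

lemma SB_antisymm : ∀ a b : Letter, SB a b → ¬ SB b a := by decide

/-! ### Structure of the fixed point `w` -/

lemma applyM_length (z : List Letter) : (applyM phi z).length = 4 * z.length := by
  induction z with
  | nil => simp [applyM]
  | cons a t ih =>
      simp only [applyM, List.flatMap_cons, List.length_append, List.length_cons] at *
      rw [phi_length a, ih]; ring

lemma applyM_getD (d : Letter) : ∀ (z : List Letter) (j r : ℕ), j < z.length → r < 4 →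
    (applyM phi z).getD (4 * j + r) d = (phi (z.getD j (X 0))).getD r d := by
  intro z
  induction z with
  | nil => intro j r hj _; simp at hj
  | cons a t ih =>
      intro j r hj hr
      rcases j with _ | j
      · simpa [applyM, List.flatMap_cons] using
          List.getD_append (phi a) (applyM phi t) d r (by rw [phi_length] <;> omega)
      · have h4 : 4 * (j + 1) + r = (phi a).length + (4 * j + r) := by rw [phi_length]; ring
        simp only [applyM, List.flatMap_cons, h4, List.getD_cons_succ]
        rw [List.getD_append_right _ _ _ _ (by omega), Nat.add_sub_cancel_left]
        exact ih j r (by simpa using hj) hr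

lemma applyM_drop : ∀ (z : List Letter) (t : ℕ),
    applyM phi (z.drop t) = (applyM phi z).drop (4 * t) := by
  intro z
  induction z with
  | nil => simp [applyM]
  | cons a u ih =>
      intro t
      rcases t with _ | t
      · simp
      · calc applyM phi ((a :: u).drop (t + 1)) = applyM phi (u.drop t) := rfl
        _ = (applyM phi u).drop (4 * t) := ih t
        _ = (phi a ++ applyM phi u).drop ((phi a).length + 4 * t) := (List.drop_length_add_append _).symm
        _ = (applyM phi (a :: u)).drop (4 * (t + 1)) := by
              rw [phi_length]
              congr 1
              · omega

lemma applyM_take : ∀ (z : List Letter) (t : ℕ),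
    applyM phi (z.take t) = (applyM phi z).take (4 * t) := by
  intro z
  induction z with
  | nil => simp [applyM]
  | cons a u ih =>
      intro t
      rcases t with _ | t
      · simp [applyM]
      · calc applyM phi ((a :: u).take (t + 1)) = phi a ++ applyM phi (u.take t) := rfl
        _ = phi a ++ (applyM phi u).take (4 * t) := by rw [ih t]
        _ = (phi a ++ applyM phi u).take ((phi a).length + 4 * t) := (List.take_length_add_append _).symm
        _ = (applyM phi (a :: u)).take (4 * (t + 1)) := by
              rw [phi_length]
              congr 1
              · omega

section W

variable {w : ℕ → Letter} (hw : IsFixedPointWord w)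

include hw

lemma w_block : ∀ j r : ℕ, r < 4 → w (4 * j + r) = (phi (w j)).getD r (X 0) := by
  intro j r hr
  set n := j + 1 with hn
  have hjn : j < 4 ^ n :=
    lt_of_lt_of_le (by omega) (le_of_lt (Nat.lt_pow_self (n := n) (by norm_num : (1:ℕ) < 4)))
  have h2 : toListW w 0 (4 ^ (n + 1)) = applyM phi (toListW w 0 (4 ^ n)) := by
    rw [hw n, hw (n + 1), Function.iterate_succ_apply']
  have hlt : 4 * j + r < 4 ^ (n + 1) := by
    have : j + 1 ≤ 4 ^ n := hjn
    calc 4 * j + r < 4 * (j + 1) := by omega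
    _ ≤ 4 * 4 ^ n := by omega
    _ = 4 ^ (n + 1) := by ring
  have e1 : w (4 * j + r) = (toListW w 0 (4 ^ (n + 1))).getD (4 * j + r) (X 0) := by
    rw [toListW_getD _ _ hlt, Nat.zero_add]
  rw [e1, h2, applyM_getD _ _ _ _ (by simpa [toListW_length] using hjn) hr,
    toListW_getD _ _ hjn, Nat.zero_add]

lemma w_block_list (j : ℕ) : toListW w (4 * j) 4 = phi (w j) := by
  apply toListW_eq_of_getD w (X 0) (phi_length _)
  intro k hk
  rw [w_block hw j k hk]

lemma w_fst (m : ℕ) : (w m).1 = true ↔ 2 ≤ m % 4 := by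
  have hm : m = 4 * (m / 4) + m % 4 := by omega
  rw [hm, w_block hw (m / 4) (m % 4) (by omega)]
  have := phi_fst (w (m / 4)) (m % 4) (by omega)
  rw [this]
  omega

lemma fst_congr {a b : ℕ} (h : w a = w b) : (2 ≤ a % 4 ↔ 2 ≤ b % 4) := by
  rw [← w_fst hw, ← w_fst hw, h]

lemma toListW_applyM : ∀ (m q : ℕ), toListW w (4 * q) (4 * m) = applyM phi (toListW w q m) := by
  intro m
  induction m with
  | zero => intro q; simp [toListW, applyM]
  | succ m ih =>
      intro q
      have h1 : 4 * (m + 1) = 4 * m + 4 := by ring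
      rw [h1, toListW_add, ih, toListW_add w q m 1, toListW_one]
      rw [show 4 * q + 4 * m = 4 * (q + m) by ring, w_block_list hw]
      simp [applyM, List.flatMap_append]

lemma w_pair : ∀ j : ℕ, SB (w j) (w (j + 1)) := by
  intro j
  induction j using Nat.strong_induction_on with
  | _ j IH =>
    have hj : j = 4 * (j / 4) + j % 4 := by omega
    set q := j / 4 with hq
    have hr : j % 4 < 4 := by omega
    rcases Nat.lt_or_ge (j % 4) 3 with h3 | h3
    · have e1 : w j = (phi (w q)).getD (j % 4) (X 0) := by
        have := w_block hw q (j % 4) (by omega)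
        rwa [show 4 * q + j % 4 = j by omega] at this
      have e2 : w (j + 1) = (phi (w q)).getD (j % 4 + 1) (X 0) := by
        have := w_block hw q (j % 4 + 1) (by omega)
        rwa [show 4 * q + (j % 4 + 1) = j + 1 by omega] at this
      rw [e1, e2]
      exact SB_inner (w q) (j % 4) h3
    · have h3' : j % 4 = 3 := by omega
      have e1 : w j = (phi (w q)).getD 3 (X 0) := by
        have := w_block hw q 3 (by omega)
        rwa [show 4 * q + 3 = j by omega] at this
      have e2 : w (j + 1) = (phi (w (q + 1))).getD 0 (X 0) := by
        rw [show j + 1 = 4 * (q + 1) + 0 by omega]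
        exact w_block hw (q + 1) 0 (by omega)
      rw [e1, e2]
      exact SB_closure _ _ (IH q (by omega))

end W



lemma occ_getD {α : Type*} (d : α) {w : ℕ → α} {v : List α} {i n k : ℕ}
    (h : toListW w i n = v) (hk : k < n) : v.getD k d = w (i + k) := by
  rw [← h, toListW_getD _ _ hk]

section W2

variable {w : ℕ → Letter} (hw : IsFixedPointWord w)

lemma rot_occ_letter_lo {v : List Letter} {i p k j : ℕ}
    (hv : toListW w i v.length = v) (hp : toListW w p v.length = v.drop k ++ v.take k)
    (hj : j < v.length - k) : w (p + j) = w (i + (k + j)) := by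
  have h1 := occ_getD (X 0) hp (show j < v.length by omega)
  rw [rot_getD_lo (X 0) hj] at h1
  have h2 := occ_getD (X 0) hv (show k + j < v.length by omega)
  exact h1.symm.trans h2

lemma rot_occ_letter_hi {v : List Letter} {i p k j : ℕ}
    (hv : toListW w i v.length = v) (hp : toListW w p v.length = v.drop k ++ v.take k)
    (hk : k ≤ v.length) (h1 : v.length - k ≤ j) (h2 : j < v.length) :
    w (p + j) = w (i + (j - (v.length - k))) := by
  have e1 := occ_getD (X 0) hp h2
  rw [rot_getD_hi (X 0) hk h1 h2] at e1
  have e2 := occ_getD (X 0) hv (show j - (v.length - k) < v.length by omega)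
  exact e1.symm.trans e2

include hw

lemma phi_rot2_not_factor (a : Letter) :
    ¬ IsFactor ((phi a).drop 2 ++ (phi a).take 2) w := by
  rintro ⟨p2, hp2⟩
  have hL : ((phi a).drop 2 ++ (phi a).take 2).length = 4 := by
    rw [rot_length (by rw [phi_length] <;> omega), phi_length]
  rw [hL] at hp2
  have e0 : w p2 = (phi a).getD 2 (X 0) := by
    have h := (occ_getD (X 0) hp2 (show 0 < 4 by omega)).symm
    rw [rot_getD_lo (X 0) (by rw [phi_length] <;> omega)] at h
    simpa using h
  have e1 : w (p2 + 1) = (phi a).getD 3 (X 0) := by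
    have h := (occ_getD (X 0) hp2 (show 1 < 4 by omega)).symm
    rwa [rot_getD_lo (X 0) (by rw [phi_length] <;> omega)] at h
  have e2 : w (p2 + 2) = (phi a).getD 0 (X 0) := by
    have h := (occ_getD (X 0) hp2 (show 2 < 4 by omega)).symm
    rw [rot_getD_hi (X 0) (by rw [phi_length] <;> omega) (by rw [phi_length] <;> omega)
      (by rw [phi_length] <;> omega)] at h
    rw [phi_length] at h
    rwa [show 2 - (4 - 2) = 0 from rfl] at h
  have e3 : w (p2 + 3) = (phi a).getD 1 (X 0) := by
    have h := (occ_getD (X 0) hp2 (show 3 < 4 by omega)).symm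
    rw [rot_getD_hi (X 0) (by rw [phi_length] <;> omega) (by rw [phi_length] <;> omega)
      (by rw [phi_length] <;> omega)] at h
    rw [phi_length] at h
    rwa [show 3 - (4 - 2) = 1 from rfl] at h
  -- pattern forces p2 % 4 = 2
  have c0 : 2 ≤ p2 % 4 ↔ 2 ≤ 2 % 4 := by rw [← w_fst hw, e0, phi_fst a 2 (by omega)]
  have c1 : 2 ≤ (p2 + 1) % 4 ↔ 2 ≤ 3 % 4 := by rw [← w_fst hw, e1, phi_fst a 3 (by omega)]
  have c2 : 2 ≤ (p2 + 2) % 4 ↔ 2 ≤ 0 % 4 := by rw [← w_fst hw, e2, phi_fst a 0 (by omega)]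
  have hp20 : p2 % 4 = 2 := by omega
  set q2 := p2 / 4 with hq2
  have b0 : w (4 * q2 + 2) = (phi (w q2)).getD 2 (X 0) := w_block hw q2 2 (by omega)
  have b1 : w (4 * q2 + 3) = (phi (w q2)).getD 3 (X 0) := w_block hw q2 3 (by omega)
  have b2 : w (4 * (q2 + 1) + 0) = (phi (w (q2 + 1))).getD 0 (X 0) := w_block hw (q2+1) 0 (by omega)
  have b3 : w (4 * (q2 + 1) + 1) = (phi (w (q2 + 1))).getD 1 (X 0) := w_block hw (q2+1) 1 (by omega)
  rw [show 4 * q2 + 2 = p2 by omega] at b0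
  rw [show 4 * q2 + 3 = p2 + 1 by omega] at b1
  rw [show 4 * (q2 + 1) + 0 = p2 + 2 by omega] at b2
  rw [show 4 * (q2 + 1) + 1 = p2 + 3 by omega] at b3
  have ha1 : w q2 = a := phi_inj23 _ _ (b0.symm.trans e0) (b1.symm.trans e1)
  have ha2 : w (q2 + 1) = a := phi_inj01 _ _ (b2.symm.trans e2) (b3.symm.trans e3)
  have := w_pair hw q2
  rw [ha1, ha2] at this
  exact SB_antisymm a a this this

lemma key : ∀ (n : ℕ) (v : List Letter), 2 ≤ n → v.length = n → IsFactor v w →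
    ∃ k, 0 < k ∧ k < n ∧ ¬ IsFactor (v.drop k ++ v.take k) w := by
  intro n
  induction n using Nat.strong_induction_on with
  | _ n IH =>
  intro v hn hlen hfac
  obtain ⟨i, hv⟩ := hfac
  have hv' : toListW w i v.length = v := hv
  rw [hlen] at hv
  by_cases h4 : n % 4 = 0
  · -- n divisible by 4, n ≥ 4
    set k0 := (4 - i % 4) % 4 with hk0
    by_cases hf' : IsFactor (v.drop k0 ++ v.take k0) w
    · obtain ⟨p, hp⟩ := hf'
      rw [rot_length (by omega)] at hp
      -- the aligned occurrence starts at a multiple of 4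
      have cj : ∀ j, j < 3 → (2 ≤ (p + j) % 4 ↔ 2 ≤ (i + k0 + j) % 4) := by
        intro j hj
        by_cases hlo : j < v.length - k0
        · have h := fst_congr hw (rot_occ_letter_lo hv' hp hlo)
          omega
        · have h := fst_congr hw
            (rot_occ_letter_hi hv' hp (j := j) (by omega) (by omega) (by omega))
          omega
      have hc0 := cj 0 (by omega)
      have hc1 := cj 1 (by omega)
      have hc2 := cj 2 (by omega)
      have hp0 : p % 4 = 0 := by omega
      set q := p / 4 with hqdef
      set m := n / 4 with hmdef
      have happ : v.drop k0 ++ v.take k0 = applyM phi (toListW w q m) := by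
        rw [← hp, hlen, show p = 4 * q by omega, show n = 4 * m by omega, toListW_applyM hw]
      rcases eq_or_ne m 1 with hm1 | hm1
      · -- n = 4
        have hn4 : n = 4 := by omega
        set a := w q with hadef
        have ha : v.drop k0 ++ v.take k0 = phi a := by
          rw [happ, hm1, toListW_one]
          simp [applyM]
          rfl
        have hz := phi_rot2_not_factor hw a
        have hcase : k0 = 0 ∨ k0 = 1 ∨ k0 = 2 ∨ k0 = 3 := by omega
        rcases hcase with hcs | hcs | hcs | hcs
        · -- k0 = 0 : v itself is phi a, answer k = 2
          rw [hcs] at ha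
          simp only [List.drop_zero, List.take_zero, List.append_nil] at ha
          refine ⟨2, by omega, by omega, ?_⟩
          rw [ha]
          exact hz
        · -- k0 = 1 : answer k = 3
          rw [hcs] at ha
          refine ⟨3, by omega, by omega, ?_⟩
          have hr := rot_rot v (a := 1) (b := 2) (by omega) (by omega)
          rw [ha] at hr
          rw [show (3 : ℕ) = 1 + 2 from rfl, ← hr]
          exact hz
        · -- k0 = 2 : contradiction, v itself would be a non-factor
          exfalso
          rw [hcs] at ha
          have hr := rot_rot v (a := 2) (b := 2) (by omega) (by omega)
          rw [ha] at hr
          rw [show (2 : ℕ) + 2 = v.length by omega, List.drop_length, List.take_length,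
            List.nil_append] at hr
          rw [hr] at hz
          exact hz ⟨i, hv'⟩
        · -- k0 = 3 : answer k = 1
          rw [hcs] at ha
          refine ⟨1, by omega, by omega, ?_⟩
          have hA := rot_rot v (a := 3) (b := 1) (by omega) (by omega)
          rw [ha] at hA
          rw [show (3 : ℕ) + 1 = v.length by omega, List.drop_length, List.take_length,
            List.nil_append] at hA
          have hB := rot_rot (phi a) (a := 1) (b := 1) (by rw [phi_length] <;> omega)
            (by rw [phi_length] <;> omega)
          rw [hA] at hB
          rw [show (1 : ℕ) + 1 = 2 from rfl] at hB
          rw [hB]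
          exact hz
      · -- m ≥ 2
        have hm2 : 2 ≤ m := by omega
        set u := toListW w q m with hudef
        have hul : u.length = m := toListW_length _ _ _
        have hufac : IsFactor u w := ⟨q, by rw [hul]⟩
        obtain ⟨t, ht0, htm, htf⟩ := IH m (by omega) u hm2 hul hufac
        have hnf : ¬ IsFactor (applyM phi (u.drop t ++ u.take t)) w := by
          rintro ⟨p3, hp3⟩
          set z := u.drop t ++ u.take t with hzdef
          have hzl : z.length = m := by rw [hzdef, rot_length (by omega), hul]
          have hal : (applyM phi z).length = 4 * m := by rw [applyM_length, hzl]
          rw [hal] at hp3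
          have cz : ∀ j, j < 3 → (2 ≤ (p3 + j) % 4 ↔ 2 ≤ j % 4) := by
            intro j hj
            have b2 : w (p3 + (4 * 0 + j)) = (applyM phi z).getD (4 * 0 + j) (X 0) :=
              (occ_getD (X 0) hp3 (by omega)).symm
            rw [applyM_getD _ _ _ _ (by omega) (by omega)] at b2
            simp only [Nat.mul_zero, Nat.zero_add] at b2
            rw [← w_fst hw, b2]
            exact phi_fst _ j (by omega)
          have hz0 := cz 0 (by omega)
          have hz1 := cz 1 (by omega)
          have hz2 := cz 2 (by omega)
          have hp30 : p3 % 4 = 0 := by omega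
          set q3 := p3 / 4 with hq3def
          have hzj : ∀ j, j < m → w (q3 + j) = z.getD j (X 0) := by
            intro j hj
            apply phi_inj01
            · have b1 : w (4 * (q3 + j) + 0) = (phi (w (q3 + j))).getD 0 (X 0) :=
                w_block hw _ 0 (by omega)
              have b2 : w (p3 + (4 * j + 0)) = (applyM phi z).getD (4 * j + 0) (X 0) :=
                (occ_getD (X 0) hp3 (by omega)).symm
              rw [applyM_getD _ _ _ _ (by omega) (by omega)] at b2
              rw [show 4 * (q3 + j) + 0 = p3 + (4 * j + 0) by omega] at b1
              exact b1.symm.trans b2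
            · have b1 : w (4 * (q3 + j) + 1) = (phi (w (q3 + j))).getD 1 (X 0) :=
                w_block hw _ 1 (by omega)
              have b2 : w (p3 + (4 * j + 1)) = (applyM phi z).getD (4 * j + 1) (X 0) :=
                (occ_getD (X 0) hp3 (by omega)).symm
              rw [applyM_getD _ _ _ _ (by omega) (by omega)] at b2
              rw [show 4 * (q3 + j) + 1 = p3 + (4 * j + 1) by omega] at b1
              exact b1.symm.trans b2
          exact htf ⟨q3, by rw [hzl]; exact toListW_eq_of_getD w (X 0) hzl hzj⟩
        refine ⟨k0 + 4 * t, by omega, by omega, ?_⟩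
        have hrot : v.drop (k0 + 4 * t) ++ v.take (k0 + 4 * t)
            = applyM phi (u.drop t ++ u.take t) := by
          rw [← rot_rot v (a := k0) (b := 4 * t) (by omega) (by omega), happ,
            ← applyM_drop, ← applyM_take]
          simp [applyM, List.flatMap_append]
        rw [hrot]
        exact hnf
    · refine ⟨k0, ?_, by omega, hf'⟩
      rcases Nat.eq_zero_or_pos k0 with h | h
      · exfalso
        apply hf'
        rw [h]
        exact ⟨i, by simpa using hv'⟩
      · exact h
  · rcases eq_or_ne n 2 with h2 | h2
    · -- length 2: use the table of 2-factors
      refine ⟨1, one_pos, by omega, ?_⟩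
      rintro ⟨p, hp⟩
      rw [rot_length (by omega)] at hp
      have e0 : w (p + 0) = v.getD (1 + 0) (X 0) := by
        have h := (occ_getD (X 0) hp (k := 0) (show 0 < v.length by omega)).symm
        rwa [rot_getD_lo (X 0) (k := 1) (j := 0) (by omega)] at h
      rw [show p + 0 = p from rfl, show 1 + 0 = 1 from rfl] at e0
      have e1 : w (p + 1) = v.getD (1 - (v.length - 1)) (X 0) := by
        have h := (occ_getD (X 0) hp (k := 1) (show 1 < v.length by omega)).symm
        rwa [rot_getD_hi (X 0) (k := 1) (j := 1) (by omega) (by omega) (by omega)] at h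
      rw [show 1 - (v.length - 1) = 0 by omega] at e1
      have f0 : w (i + 0) = v.getD 0 (X 0) := (occ_getD (X 0) hv' (k := 0) (by omega)).symm
      rw [show i + 0 = i from rfl] at f0
      have f1 : w (i + 1) = v.getD 1 (X 0) := (occ_getD (X 0) hv' (k := 1) (by omega)).symm
      have hab := w_pair hw i
      have hba := w_pair hw p
      rw [f0, f1] at hab
      rw [e0, e1] at hba
      exact SB_antisymm _ _ hab hba
    · rcases eq_or_ne n 3 with h3 | h3
      · by_contra hcon
        push_neg at hcon
        obtain ⟨p, hp⟩ := hcon 1 one_pos (by omega)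
        obtain ⟨q, hq⟩ := hcon 2 (by omega) (by omega)
        rw [rot_length (by omega)] at hp
        rw [rot_length (by omega)] at hq
        have f0 := fst_congr hw (rot_occ_letter_lo hv' hp (j := 0) (by omega))
        have f1 := fst_congr hw (rot_occ_letter_lo hv' hp (j := 1) (by omega))
        have f2 := fst_congr hw
          (rot_occ_letter_hi hv' hp (k := 1) (j := 2) (by omega) (by omega) (by omega))
        have g0 := fst_congr hw (rot_occ_letter_lo hv' hq (j := 0) (by omega))
        have g1 := fst_congr hw
          (rot_occ_letter_hi hv' hq (k := 2) (j := 1) (by omega) (by omega) (by omega))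
        have g2 := fst_congr hw
          (rot_occ_letter_hi hv' hq (k := 2) (j := 2) (by omega) (by omega) (by omega))
        have hL : v.length = n := hlen
        omega
      · have h5 : 5 ≤ n := by omega
        by_contra hcon
        push_neg at hcon
        obtain ⟨p, hp⟩ := hcon 1 one_pos (by omega)
        obtain ⟨q, hq⟩ := hcon 2 (by omega) (by omega)
        rw [rot_length (by omega)] at hp
        rw [rot_length (by omega)] at hq
        have f1 := fst_congr hw (rot_occ_letter_lo hv' hp (j := n - 5) (by omega))
        have f2 := fst_congr hw
          (rot_occ_letter_hi hv' hp (k := 1) (j := n - 1) (by omega) (by omega) (by omega))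
        have g1 := fst_congr hw (rot_occ_letter_lo hv' hq (j := n - 5) (by omega))
        have g2 := fst_congr hw
          (rot_occ_letter_hi hv' hq (k := 2) (j := n - 1) (by omega) (by omega) (by omega))
        have hL : v.length = n := hlen
        omega

end W2


end Stmt19

/-- The relation on the free algebra identifying with `0` every monomial
corresponding to a finite word that is not a factor of `w`. -/
def relOf (k : Type*) [Field k] (w : ℕ → Letter) :
    FreeAlgebra k Letter → FreeAlgebra k Letter → Prop :=
  fun p q => q = 0 ∧ ∃ v : List Letter, ¬ IsFactor v w ∧ p = (v.map (FreeAlgebra.ι k)).prod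

/-- The monomial algebra `A_w = k{Σ}/I`. -/
abbrev Aw (k : Type*) [Field k] (w : ℕ → Letter) : Type _ := RingQuot (relOf k w)

attribute [local instance 100] LieRing.ofAssociativeRing

namespace Stmt19

section Algebra

variable (k : Type*) [Field k] {w : ℕ → Letter}

/-- The monomial of a word. -/
def mono (v : List Letter) : FreeAlgebra k Letter := (v.map (FreeAlgebra.ι k)).prod

lemma mono_append (u v : List Letter) : mono k (u ++ v) = mono k u * mono k v := by
  simp [mono, List.map_append, List.prod_append]

lemma mk_mono_zero {v : List Letter} (hv : ¬ IsFactor v w) :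
    RingQuot.mkAlgHom k (relOf k w) (mono k v) = 0 := by
  have h := RingQuot.mkAlgHom_rel k (s := relOf k w) (x := mono k v) (y := 0)
    ⟨rfl, v, hv, rfl⟩
  simpa using h

lemma main (hw : IsFixedPointWord w) :
    LieSubalgebra.lieSpan k (Aw k w)
      (insert 1 (Set.range fun a : Letter =>
        RingQuot.mkAlgHom k (relOf k w) (FreeAlgebra.ι k a))) = ⊤ := by
  classical
  set mk : FreeAlgebra k Letter →ₐ[k] Aw k w := RingQuot.mkAlgHom k (relOf k w) with hmk
  set M := LieSubalgebra.lieSpan k (Aw k w)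
    (insert 1 (Set.range fun a : Letter => mk (FreeAlgebra.ι k a))) with hM
  have hmono : ∀ (n : ℕ) (v : List Letter), v.length = n → mk (mono k v) ∈ M := by
    intro n
    induction n using Nat.strong_induction_on with
    | _ n IH =>
    intro v hlen
    match v, hlen with
    | [], _ =>
      have h1 : mono k ([] : List Letter) = 1 := by simp [mono]
      rw [h1, map_one]
      exact LieSubalgebra.subset_lieSpan (Set.mem_insert 1 _)
    | [a], _ =>
      have h1 : mono k [a] = FreeAlgebra.ι k a := by simp [mono]
      rw [h1]
      exact LieSubalgebra.subset_lieSpan (Set.mem_insert_of_mem _ ⟨a, rfl⟩)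
    | a :: b :: t, hlen =>
      by_cases hfac : IsFactor (a :: b :: t) w
      · have hn2 : 2 ≤ n := by simp only [List.length_cons] at hlen; omega
        obtain ⟨kk, hk0, hkn, hknot⟩ := key hw n (a :: b :: t) hn2 hlen hfac
        set v := a :: b :: t with hvdef
        have hzero : mk (mono k (v.drop kk ++ v.take kk)) = 0 := mk_mono_zero k hknot
        have h1 : mk (mono k (v.take kk)) ∈ M :=
          IH (v.take kk).length (by rw [List.length_take]; omega) _ rfl
        have h2 : mk (mono k (v.drop kk)) ∈ M :=
          IH (v.drop kk).length (by rw [List.length_drop]; omega) _ rfl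
        have heq : mk (mono k v) = ⁅mk (mono k (v.take kk)), mk (mono k (v.drop kk))⁆ := by
          rw [Ring.lie_def]
          conv_lhs => rw [← List.take_append_drop kk v]
          rw [mono_append, map_mul]
          have : mk (mono k (v.drop kk)) * mk (mono k (v.take kk)) = 0 := by
            rw [← map_mul, ← mono_append]
            exact hzero
          rw [this, sub_zero]
        rw [heq]
        exact M.lie_mem h1 h2
      · rw [mk_mono_zero k hfac]
        exact M.zero_mem
  set N := Submodule.span k (Set.range fun v : List Letter => mk (mono k v)) with hN
  have hNmul : ∀ x ∈ N, ∀ y ∈ N, x * y ∈ N := by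
    intro x hx
    induction hx using Submodule.span_induction with
    | mem x hxg =>
      obtain ⟨u, rfl⟩ := hxg
      intro y hy
      induction hy using Submodule.span_induction with
      | mem y hyg =>
        obtain ⟨v, rfl⟩ := hyg
        rw [← map_mul, ← mono_append]
        exact Submodule.subset_span ⟨u ++ v, rfl⟩
      | zero => rw [mul_zero]; exact N.zero_mem
      | add y z _ _ hy hz => rw [mul_add]; exact N.add_mem hy hz
      | smul c y _ hy => rw [mul_smul_comm]; exact N.smul_mem c hy
    | zero => intro y _; rw [zero_mul]; exact N.zero_mem
    | add x z _ _ hx hz => intro y hy; rw [add_mul]; exact N.add_mem (hx y hy) (hz y hy)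
    | smul c x _ hx => intro y hy; rw [smul_mul_assoc]; exact N.smul_mem c (hx y hy)
  have hNall : ∀ f : FreeAlgebra k Letter, mk f ∈ N := by
    intro f
    induction f using FreeAlgebra.induction with
    | grade0 r =>
      have : mk ((algebraMap k (FreeAlgebra k Letter)) r) = r • mk (mono k []) := by
        rw [AlgHom.commutes, Algebra.algebraMap_eq_smul_one]
        congr 1
        rw [show mono k ([] : List Letter) = 1 by simp [mono], map_one]
      rw [this]
      exact N.smul_mem r (Submodule.subset_span ⟨[], rfl⟩)
    | grade1 x =>
      have : FreeAlgebra.ι k x = mono k [x] := by simp [mono]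
      rw [this]
      exact Submodule.subset_span ⟨[x], rfl⟩
    | mul f g hf hg => rw [map_mul]; exact hNmul _ hf _ hg
    | add f g hf hg => rw [map_add]; exact N.add_mem hf hg
  have hle : N ≤ M.toSubmodule := by
    rw [Submodule.span_le]
    rintro _ ⟨v, rfl⟩
    exact hmono v.length v rfl
  rw [eq_top_iff]
  rintro x -
  obtain ⟨f, rfl⟩ := RingQuot.mkAlgHom_surjective k (relOf k w) x
  exact hle (hNall f)

end Algebra

end Stmt19

theorem stmt19 (k : Type*) [Field k] (w : ℕ → Letter) (hw : IsFixedPointWord w) :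
    LieSubalgebra.lieSpan k (Aw k w)
      (insert 1 (Set.range fun a : Letter =>
        RingQuot.mkAlgHom k (relOf k w) (FreeAlgebra.ι k a))) = ⊤ :=
  Stmt19.main k hw
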